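/- Let $m \ge 2$ be even, $z > 0$ real, and $z_1, \ldots, z_n$ complex numbers closed under conjugation with $\operatorname{Re} z_j < 0$ for all $j$. Let $\omega_k = e^{(2k-1)\pi i/m}$ and $q_{j,k} = \frac{\omega_k z - z_j}{\omega_0 z - \overline{z_j}}$. Then $\prod_{j=1}^n |q_{j,k}| \le 1$ for all $0 \le k < m$, with equality if and only if $k = 0$ or $k = 1$ (assuming $m > 2$ and $n \ge 1$). -/

import Mathlib

/-- The `m`-th roots of `-1`: `ω_k = e^{(2k-1)πi/m}`. -/
noncomputable def omegaRoot (m k : ℕ) : ℂ :=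
  Complex.exp ((2 * (k : ℂ) - 1) * Real.pi * Complex.I / m)

open Real

noncomputable def hpoly (z x y t : ℝ) : ℝ :=
  (z^2 + x^2 + y^2 - 2*z*x*t)^2 - 4*z^2*y^2*(1 - t^2)

lemma normsq_aux (t u zr : ℝ) (htu : t^2 + u^2 = 1) (a : ℂ) :
    (‖((t:ℂ) + u*Complex.I) * zr - a‖)^2
      = zr^2 + a.re^2 + a.im^2 - 2*zr*(t*a.re + u*a.im) := by
  rw [Complex.sq_norm, Complex.normSq_apply]
  simp only [Complex.sub_re, Complex.sub_im, Complex.add_re, Complex.add_im, Complex.mul_re,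
    Complex.mul_im, Complex.I_re, Complex.I_im, Complex.ofReal_re, Complex.ofReal_im]
  ring_nf
  nlinarith [htu]

lemma pair_aux (t u zr : ℝ) (htu : t^2 + u^2 = 1) (a : ℂ) :
    (‖((t:ℂ) + u*Complex.I) * zr - a‖)^2
      * (‖((t:ℂ) + u*Complex.I) * zr - (starRingEnd ℂ) a‖)^2
      = hpoly zr a.re a.im t := by
  rw [normsq_aux t u zr htu a, normsq_aux t u zr htu ((starRingEnd ℂ) a)]
  simp only [Complex.conj_re, Complex.conj_im, hpoly]
  linear_combination (-(4*zr^2*a.im^2)) * htu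

lemma key_aux (z x y s t : ℝ) (hz : 0 < z) (hx : x < 0) (hts : t < s) (hst : 0 ≤ s + t) :
    hpoly z x y t < hpoly z x y s := by
  have hd : hpoly z x y s - hpoly z x y t
      = 4*z*(s-t) * (z*(x^2+y^2)*(s+t) - x*(z^2+x^2+y^2)) := by
    simp only [hpoly]; ring
  have h1 : 0 < 4*z*(s-t) := by nlinarith
  have h2 : 0 < z*(x^2+y^2)*(s+t) - x*(z^2+x^2+y^2) := by
    have h3 := mul_nonneg (mul_nonneg hz.le (by positivity : (0:ℝ) ≤ x^2+y^2)) hst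
    have h4 : 0 < (-x) * (z^2+x^2+y^2) := mul_pos (by linarith) (by positivity)
    nlinarith
  nlinarith [mul_pos h1 h2]

lemma inrange_aux (p φ : ℝ) (hp : 0 < p) (h1 : 3*p ≤ φ) (h2 : φ ≤ π - p) :
    Real.cos φ < Real.cos p ∧ -Real.cos φ ≤ Real.cos p := by
  constructor
  · exact Real.cos_lt_cos_of_nonneg_of_le_pi hp.le (by linarith) (by linarith)
  · have := Real.cos_le_cos_of_nonneg_of_le_pi hp.le (y := π - φ) (by linarith) (by linarith)
    rw [Real.cos_pi_sub] at this
    linarith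

lemma angle_aux (m k : ℕ) (hme : Even m) (hk2 : 2 ≤ k) (hkm : k < m) :
    Real.cos ((2*(k:ℝ)-1) * (π/m)) < Real.cos (π/m)
      ∧ 0 ≤ Real.cos (π/m) + Real.cos ((2*(k:ℝ)-1) * (π/m)) := by
  have hm0 : 0 < m := by omega
  have hp : 0 < π/m := by positivity
  have hmp : (m:ℝ) * (π/m) = π := by field_simp
  set p := π/m with hpdef
  set θ := (2*(k:ℝ)-1) * p with hθ
  have hcases : 2*k ≤ m ∨ m + 2 ≤ 2*k := by
    obtain ⟨r, hr⟩ := hme; omega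
  rcases hcases with h | h
  · have hk3 : (3:ℝ) ≤ 2*(k:ℝ)-1 := by
      have : (2:ℝ) ≤ (k:ℝ) := by exact_mod_cast hk2
      linarith
    have hkub : (2*(k:ℝ)-1) ≤ (m:ℝ) - 1 := by
      have : (2*(k:ℝ)) ≤ (m:ℝ) := by exact_mod_cast h
      linarith
    have h1 : 3*p ≤ θ := by nlinarith
    have h2 : θ ≤ π - p := by nlinarith
    obtain ⟨ha, hb⟩ := inrange_aux p θ hp h1 h2
    exact ⟨ha, by linarith⟩
  · set φ := 2*π - θ with hφ
    have hlb : (m:ℝ) + 1 ≤ 2*(k:ℝ)-1 := by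
      have : ((m:ℝ) + 2) ≤ 2*(k:ℝ) := by exact_mod_cast h
      linarith
    have hub : (2*(k:ℝ)-1) ≤ 2*(m:ℝ) - 3 := by
      have : (k:ℝ) + 1 ≤ (m:ℝ) := by exact_mod_cast hkm
      linarith
    have h1 : 3*p ≤ φ := by rw [hφ, hθ]; nlinarith
    have h2 : φ ≤ π - p := by rw [hφ, hθ]; nlinarith
    have hcoseq : Real.cos θ = Real.cos φ := by
      rw [hφ, ← Real.cos_two_pi_sub θ]
    obtain ⟨ha, hb⟩ := inrange_aux p φ hp h1 h2
    rw [hcoseq]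
    exact ⟨ha, by linarith⟩

/-- For even `m ≥ 2`, `z > 0`, and `z_1, …, z_n` closed under conjugation with `Re z_j < 0`,
setting `q_{j,k} = (ω_k z - z_j)/(ω_0 z - conj z_j)`, one has `∏_j |q_{j,k}| ≤ 1` for all
`0 ≤ k < m`, with equality iff `k = 0` or `k = 1` (assuming `m > 2` and `n ≥ 1`). -/
theorem stmt_9 (m : ℕ) (hm : 2 ≤ m) (hme : Even m) (z : ℝ) (hz : 0 < z) (n : ℕ)
    (zs : Fin n → ℂ)
    (hconj : Multiset.map (starRingEnd ℂ) (List.ofFn zs : Multiset ℂ) = (List.ofFn zs : Multiset ℂ))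
    (hre : ∀ j, (zs j).re < 0) :
    (∀ k < m, ∏ j, ‖
        ((omegaRoot m k * z - zs j) / (omegaRoot m 0 * z - (starRingEnd ℂ) (zs j)))‖ ≤ 1) ∧
    (2 < m → 1 ≤ n → ∀ k < m,
      ((∏ j, ‖
          ((omegaRoot m k * z - zs j) / (omegaRoot m 0 * z - (starRingEnd ℂ) (zs j)))‖) = 1
        ↔ k = 0 ∨ k = 1)) := by
  have hm0 : (0:ℝ) < m := by positivity
  have hp : 0 < π/m := by positivity
  set p := π/m with hpdef
  -- ω in cos/sin form
  have hω : ∀ k : ℕ, omegaRoot m k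
      = (Real.cos ((2*(k:ℝ)-1)*p) : ℂ) + (Real.sin ((2*(k:ℝ)-1)*p) : ℂ) * Complex.I := by
    intro k
    unfold omegaRoot
    have harg : (2 * (k : ℂ) - 1) * Real.pi * Complex.I / m
        = (((2*(k:ℝ)-1)*p : ℝ) : ℂ) * Complex.I := by
      rw [hpdef]; push_cast; ring
    rw [harg, Complex.exp_mul_I, ← Complex.ofReal_cos, ← Complex.ofReal_sin]
  have he1 : (2*((1:ℕ):ℝ)-1)*p = p := by push_cast; ring
  have he0 : (2*((0:ℕ):ℝ)-1)*p = -p := by push_cast; ring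
  have hp2 : p ≤ π/2 := by
    rw [hpdef, div_le_div_iff₀ hm0 (by norm_num : (0:ℝ) < 2)]
    have h2m : (2:ℝ) ≤ m := by exact_mod_cast hm
    nlinarith [Real.pi_pos, mul_le_mul_of_nonneg_left h2m Real.pi_pos.le]
  have hcosp : 0 ≤ Real.cos p := Real.cos_nonneg_of_mem_Icc ⟨by linarith, hp2⟩
  -- conj of ω₀ is ω₁
  have hconj0 : (starRingEnd ℂ) (omegaRoot m 0) = omegaRoot m 1 := by
    rw [hω 0, hω 1, he0, he1, Real.cos_neg, Real.sin_neg]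
    simp only [map_add, map_mul, map_neg, Complex.conj_ofReal, Complex.conj_I, Complex.ofReal_neg]
    ring
  -- factors at ω₁ are nonzero
  have hfac1 : ∀ (a : ℂ), a.re < 0 → omegaRoot m 1 * z - a ≠ 0 := by
    intro a ha h0
    have hre0 : (omegaRoot m 1 * (z:ℂ) - a).re = Real.cos p * z - a.re := by
      rw [hω 1, he1]
      simp only [Complex.sub_re, Complex.add_re, Complex.mul_re, Complex.add_im,
        Complex.ofReal_re, Complex.ofReal_im, Complex.mul_im, Complex.I_re, Complex.I_im]
      ring
    rw [h0] at hre0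
    simp only [Complex.zero_re] at hre0
    nlinarith [mul_nonneg hcosp hz.le]
  set P : ℕ → ℝ := fun k => ∏ j, ‖omegaRoot m k * z - zs j‖ with hPdef
  have hPk : ∀ k, P k = ∏ j, ‖omegaRoot m k * z - zs j‖ := fun _ => rfl
  have hPnn : ∀ k, 0 ≤ P k := fun k => Finset.prod_nonneg fun j _ => norm_nonneg _
  have hP1pos : 0 < P 1 :=
    Finset.prod_pos fun j _ => norm_pos_iff.mpr (hfac1 _ (hre j))
  -- conjugation symmetry of products
  have hsymm : ∀ g : ℂ → ℝ, (∏ j, g ((starRingEnd ℂ) (zs j))) = ∏ j, g (zs j) := by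
    intro g
    have h1 := congrArg (fun M : Multiset ℂ => (M.map g).prod) hconj
    simp only [Multiset.map_map, Function.comp] at h1
    simpa [Multiset.map_coe, Multiset.prod_coe, List.map_ofFn, List.prod_ofFn,
      Function.comp] using h1
  -- denominators
  have hden : ∀ j, ‖omegaRoot m 0 * z - (starRingEnd ℂ) (zs j)‖
      = ‖omegaRoot m 1 * z - zs j‖ := by
    intro j
    rw [← Complex.norm_conj]
    congr 1
    rw [map_sub, map_mul, hconj0, Complex.conj_ofReal, Complex.conj_conj]
  -- fourth power formula
  have hQ : ∀ k, P k ^ 4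
      = ∏ j, hpoly z (zs j).re (zs j).im (Real.cos ((2*(k:ℝ)-1)*p)) := by
    intro k
    have e1 : (∏ j, ‖omegaRoot m k * z - (starRingEnd ℂ) (zs j)‖) = P k :=
      hsymm (fun a => ‖omegaRoot m k * z - a‖)
    calc P k ^ 4
        = (∏ j, (‖omegaRoot m k * z - zs j‖
            * ‖omegaRoot m k * z - (starRingEnd ℂ) (zs j)‖))^2 := by
          rw [Finset.prod_mul_distrib, e1, ← hPk k]; ring
      _ = ∏ j, (‖omegaRoot m k * z - zs j‖^2
            * ‖omegaRoot m k * z - (starRingEnd ℂ) (zs j)‖^2) := by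
          rw [← Finset.prod_pow]
          exact Finset.prod_congr rfl fun j _ => by ring
      _ = _ := Finset.prod_congr rfl fun j _ => by
          rw [hω k]
          exact pair_aux _ _ z (Real.cos_sq_add_sin_sq _) (zs j)
  have hcos1eq : ((2:ℝ)*((1:ℕ):ℝ)-1)*p = p := he1
  have hnn : ∀ (j : Fin n) (θ : ℝ), 0 ≤ hpoly z (zs j).re (zs j).im (Real.cos θ) := by
    intro j θ
    rw [← pair_aux (Real.cos θ) (Real.sin θ) z (Real.cos_sq_add_sin_sq θ) (zs j)]
    positivity
  have homega1 : ((Real.cos p : ℂ) + (Real.sin p : ℂ) * Complex.I) = omegaRoot m 1 := by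
    rw [hω 1, he1]
  have hposs : ∀ j : Fin n, 0 < hpoly z (zs j).re (zs j).im (Real.cos p) := by
    intro j
    rw [← pair_aux (Real.cos p) (Real.sin p) z (Real.cos_sq_add_sin_sq p) (zs j), homega1]
    have h1 := norm_pos_iff.mpr (hfac1 _ (hre j))
    have h2 : ((starRingEnd ℂ) (zs j)).re < 0 := by
      rw [Complex.conj_re]; exact hre j
    have h3 := norm_pos_iff.mpr (hfac1 _ h2)
    positivity
  -- comparison lemmas
  have hPle : ∀ k, 2 ≤ k → k < m → P k ≤ P 1 := by
    intro k hk2 hkm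
    obtain ⟨hA, hB⟩ := angle_aux m k hme hk2 hkm
    rw [← hpdef] at hA hB
    have hq : P k ^ 4 ≤ P 1 ^ 4 := by
      rw [hQ k, hQ 1, hcos1eq]
      exact Finset.prod_le_prod (fun j _ => hnn j _)
        (fun j _ => (key_aux z _ _ _ _ hz (hre j) hA hB).le)
    by_contra hcon
    push_neg at hcon
    have := pow_lt_pow_left₀ hcon (hPnn 1) (by norm_num : 4 ≠ 0)
    linarith
  have hPlt : ∀ k, 2 ≤ k → k < m → 1 ≤ n → P k < P 1 := by
    intro k hk2 hkm hn
    haveI : Nonempty (Fin n) := Fin.pos_iff_nonempty.mp (by omega)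
    obtain ⟨hA, hB⟩ := angle_aux m k hme hk2 hkm
    rw [← hpdef] at hA hB
    have hq : P k ^ 4 < P 1 ^ 4 := by
      rw [hQ k, hQ 1, hcos1eq]
      by_cases hzero : ∃ j, hpoly z (zs j).re (zs j).im (Real.cos ((2*(k:ℝ)-1)*p)) = 0
      · obtain ⟨j0, hj0⟩ := hzero
        rw [Finset.prod_eq_zero (Finset.mem_univ j0) hj0]
        exact Finset.prod_pos (fun j _ => hposs j)
      · push_neg at hzero
        exact Finset.prod_lt_prod_of_nonempty
          (fun j _ => lt_of_le_of_ne (hnn j _) (Ne.symm (hzero j)))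
          (fun j _ => key_aux z _ _ _ _ hz (hre j) hA hB) Finset.univ_nonempty
    by_contra hcon
    push_neg at hcon
    have := pow_le_pow_left₀ (hPnn 1) hcon 4
    linarith
  -- P 0 = P 1
  have hP0 : P 0 = P 1 := by
    have h4 : P 0 ^ 4 = P 1 ^ 4 := by
      rw [hQ 0, hQ 1, hcos1eq, he0, Real.cos_neg]
    rcases lt_trichotomy (P 0) (P 1) with h | h | h
    · have := pow_lt_pow_left₀ h (hPnn 0) (by norm_num : 4 ≠ 0); linarith
    · exact h
    · have := pow_lt_pow_left₀ h (hPnn 1) (by norm_num : 4 ≠ 0); linarith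
  -- rewrite the goal products
  have hgoal : ∀ k, (∏ j, ‖(omegaRoot m k * z - zs j) / (omegaRoot m 0 * z - (starRingEnd ℂ) (zs j))‖) = P k / P 1 := by
    intro k
    calc (∏ j, ‖(omegaRoot m k * z - zs j) / (omegaRoot m 0 * z - (starRingEnd ℂ) (zs j))‖)
        = ∏ j, (‖omegaRoot m k * z - zs j‖
            / ‖omegaRoot m 0 * z - (starRingEnd ℂ) (zs j)‖) := by
          simp [map_div₀]
      _ = (∏ j, ‖omegaRoot m k * z - zs j‖)
            / (∏ j, ‖omegaRoot m 0 * z - (starRingEnd ℂ) (zs j)‖) :=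
          Finset.prod_div_distrib _ _
      _ = P k / P 1 := by
          rw [← hPk k]
          congr 1
          rw [hPk 1]
          exact Finset.prod_congr rfl fun j _ => hden j
  constructor
  · intro k hk
    rw [hgoal k]
    match k, hk with
    | 0, _ => rw [hP0, div_self hP1pos.ne']
    | 1, _ => rw [div_self hP1pos.ne']
    | (k+2), hk => exact (div_le_one hP1pos).mpr (hPle (k+2) (by omega) hk)
  · intro hm2 hn k hk
    rw [hgoal k]
    constructor
    · intro heq
      by_contra hor
      push_neg at hor
      have hk2 : 2 ≤ k := by omega
      have hlt := hPlt k hk2 hk hn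
      have heq' : P k = P 1 := by
        field_simp at heq
        exact heq
      linarith
    · rintro (rfl | rfl)
      · rw [hP0, div_self hP1pos.ne']
      · rw [div_self hP1pos.ne']
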